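/- Let f : X × X × (0,∞) → ℝ be jointly measurable such that f(x,·;t) ∈ L²(μ) and f(·,y;t) ∈ L²(μ) for all x, y ∈ X and t > 0, and with t ↦ f(x,y;t) integrable on (0,b) for all b > 0. Suppose there are t₀ > 0, constants C₁, C₂ ≥ 0, a nonnegative integer k, and a nonnegative function h ∈ L²(μ) such that ‖f(x,·;t)‖_{L²(μ)} ≤ C₁ h(x) t^k and ‖f(·,y;t)‖_{L²(μ)} ≤ C₂ for all 0 < t < t₀ and all x, y ∈ X. Then for every integer ℓ ≥ 2 the ℓ-fold convolution f^{∗ℓ}(x,y;t) is well defined for 0 < t < t₀ and satisfies the pointwise bound |f^{∗ℓ}(x,y;t)| ≤ C₁^{ℓ−1} C₂ ‖h‖_{L²(μ)}^{ℓ−2} h(x) (k!)^{ℓ−1} t^{(ℓ−1)(k+1)} / ((ℓ−1)(k+1))! for all x, y ∈ X and 0 < t < t₀. -/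

import Mathlib

open MeasureTheory ProbabilityTheory Filter Set Topology
open scoped ENNReal

set_option linter.unusedVariables false

section Helpers
open intervalIntegral
open scoped NNReal

lemma abs_intervalIntegral_le {φ ψ : ℝ → ℝ} {t : ℝ} (ht : 0 ≤ t)
    (hψ : IntervalIntegrable ψ volume 0 t) (hψ0 : ∀ τ ∈ Icc (0:ℝ) t, 0 ≤ ψ τ)
    (hb : ∀ τ ∈ Ioo (0:ℝ) t, |φ τ| ≤ ψ τ) :
    |∫ τ in (0:ℝ)..t, φ τ| ≤ ∫ τ in (0:ℝ)..t, ψ τ := by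
  have hne : ∀ᵐ τ : ℝ, τ ≠ t := by
    rw [ae_iff]
    simpa [not_not, Set.setOf_eq_eq_singleton'] using Real.volume_singleton (a := t)
  have hae : ∀ᵐ τ ∂(volume.restrict (Set.uIoc (0:ℝ) t)), ‖φ τ‖ ≤ ψ τ := by
    filter_upwards [ae_restrict_mem measurableSet_uIoc, ae_restrict_of_ae hne] with τ hτ hτne
    rw [Set.uIoc_of_le ht] at hτ
    simpa [Real.norm_eq_abs] using hb τ ⟨hτ.1, lt_of_le_of_ne hτ.2 hτne⟩
  have := intervalIntegral.norm_integral_le_abs_of_norm_le hae hψ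
  rw [Real.norm_eq_abs] at this
  refine this.trans ?_
  rw [abs_of_nonneg]
  exact intervalIntegral.integral_nonneg ht hψ0
variable {X : Type*} [MeasurableSpace X] {μ : Measure X}

lemma cs_core {F G : X → ℝ} (hF : AEMeasurable F μ) (hG : AEMeasurable G μ) :
    ∫⁻ z, (‖F z‖₊ : ℝ≥0∞) * (‖G z‖₊ : ℝ≥0∞) ∂μ ≤ eLpNorm F 2 μ * eLpNorm G 2 μ := by
  have hconj : Real.HolderConjugate 2 2 := by
    constructor <;> norm_num
  have := ENNReal.lintegral_mul_le_Lp_mul_Lq μ hconj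
    (f := fun z => (‖F z‖₊ : ℝ≥0∞)) (g := fun z => (‖G z‖₊ : ℝ≥0∞))
    hF.enorm hG.enorm
  rw [eLpNorm_eq_lintegral_rpow_enorm_toReal (two_ne_zero) (by norm_num),
    eLpNorm_eq_lintegral_rpow_enorm_toReal (two_ne_zero) (by norm_num)]
  simpa [ENNReal.toReal_ofNat, enorm_eq_nnnorm] using this

lemma cs_bound {F G : X → ℝ} {D E : ℝ}
    (hF : AEMeasurable F μ) (hG : AEMeasurable G μ) (hD : 0 ≤ D) (hE : 0 ≤ E)
    (hFb : eLpNorm F 2 μ ≤ ENNReal.ofReal D) (hGb : eLpNorm G 2 μ ≤ ENNReal.ofReal E) :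
    |∫ z, F z * G z ∂μ| ≤ D * E := by
  have h1 : |∫ z, F z * G z ∂μ| ≤ (∫⁻ z, ENNReal.ofReal ‖F z * G z‖ ∂μ).toReal := by
    simpa [Real.norm_eq_abs] using norm_integral_le_lintegral_norm (μ := μ) (fun z => F z * G z)
  refine h1.trans ?_
  have h2 : ∫⁻ z, ENNReal.ofReal ‖F z * G z‖ ∂μ ≤ ENNReal.ofReal D * ENNReal.ofReal E := by
    calc ∫⁻ z, ENNReal.ofReal ‖F z * G z‖ ∂μ
        = ∫⁻ z, (‖F z‖₊ : ℝ≥0∞) * (‖G z‖₊ : ℝ≥0∞) ∂μ := by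
          simp_rw [ofReal_norm, enorm_eq_nnnorm, nnnorm_mul, ENNReal.coe_mul]
      _ ≤ eLpNorm F 2 μ * eLpNorm G 2 μ := cs_core hF hG
      _ ≤ ENNReal.ofReal D * ENNReal.ofReal E := mul_le_mul' hFb hGb
  calc (∫⁻ z, ENNReal.ofReal ‖F z * G z‖ ∂μ).toReal
      ≤ (ENNReal.ofReal D * ENNReal.ofReal E).toReal :=
        ENNReal.toReal_mono (by finiteness) h2
    _ = D * E := by rw [ENNReal.toReal_mul, ENNReal.toReal_ofReal hD, ENNReal.toReal_ofReal hE]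

lemma cs_bound' {F g h : X → ℝ} {D c : ℝ}
    (hF : AEMeasurable F μ) (hhm : AEMeasurable h μ) (hhfin : eLpNorm h 2 μ ≠ ∞)
    (hD : 0 ≤ D) (hc : 0 ≤ c)
    (hFb : eLpNorm F 2 μ ≤ ENNReal.ofReal D) (hgb : ∀ z, |g z| ≤ c * h z) :
    |∫ z, F z * g z ∂μ| ≤ D * (c * (eLpNorm h 2 μ).toReal) := by
  have h1 : |∫ z, F z * g z ∂μ| ≤ (∫⁻ z, ENNReal.ofReal ‖F z * g z‖ ∂μ).toReal := by
    simpa [Real.norm_eq_abs] using norm_integral_le_lintegral_norm (μ := μ) (fun z => F z * g z)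
  refine h1.trans ?_
  have h2 : ∫⁻ z, ENNReal.ofReal ‖F z * g z‖ ∂μ
      ≤ ENNReal.ofReal D * (ENNReal.ofReal c * eLpNorm h 2 μ) := by
    calc ∫⁻ z, ENNReal.ofReal ‖F z * g z‖ ∂μ
        ≤ ∫⁻ z, (‖F z‖₊ : ℝ≥0∞) * (‖c * h z‖₊ : ℝ≥0∞) ∂μ := by
          refine lintegral_mono fun z => ?_
          rw [norm_mul, ENNReal.ofReal_mul (norm_nonneg _), ofReal_norm, enorm_eq_nnnorm]
          refine mul_le_mul_right ?_ _
          calc ENNReal.ofReal ‖g z‖ ≤ ENNReal.ofReal (c * h z) :=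
                ENNReal.ofReal_le_ofReal (by simpa [Real.norm_eq_abs] using hgb z)
            _ ≤ (‖c * h z‖₊ : ℝ≥0∞) := ENNReal.ofReal_le_of_le_toReal (by
                simp [Real.norm_eq_abs, ← abs_mul, le_abs_self])
      _ ≤ eLpNorm F 2 μ * eLpNorm (fun z => c * h z) 2 μ := cs_core hF (by fun_prop)
      _ = eLpNorm F 2 μ * (ENNReal.ofReal c * eLpNorm h 2 μ) := by
          have : (fun z => c * h z) = c • h := rfl
          rw [this, eLpNorm_const_smul]
          congr 1
          simp [ENNReal.smul_def, ← ofReal_norm, Real.norm_eq_abs,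
            abs_of_nonneg hc]
      _ ≤ ENNReal.ofReal D * (ENNReal.ofReal c * eLpNorm h 2 μ) :=
          mul_le_mul_left hFb _
  calc (∫⁻ z, ENNReal.ofReal ‖F z * g z‖ ∂μ).toReal
      ≤ (ENNReal.ofReal D * (ENNReal.ofReal c * eLpNorm h 2 μ)).toReal :=
        ENNReal.toReal_mono (by
          refine ENNReal.mul_ne_top ENNReal.ofReal_ne_top (ENNReal.mul_ne_top ENNReal.ofReal_ne_top hhfin)) h2
    _ = D * (c * (eLpNorm h 2 μ).toReal) := by
        rw [ENNReal.toReal_mul, ENNReal.toReal_mul, ENNReal.toReal_ofReal hD,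
          ENNReal.toReal_ofReal hc]

lemma beta_nat (k : ℕ) : ∀ (m : ℕ) (t : ℝ),
    ∫ τ in (0:ℝ)..t, (t - τ)^k * τ^m
      = (k.factorial * m.factorial / (k+m+1).factorial : ℝ) * t^(k+m+1) := by
  induction k with
  | zero =>
    intro m t
    simp only [pow_zero, one_mul, integral_pow, Nat.factorial]
    push_cast [Nat.factorial_succ]
    have h2 : ((m:ℝ)+1) ≠ 0 := by positivity
    have h3 : ((m.factorial : ℝ)) ≠ 0 := by positivity
    field_simp
    ring
  | succ k ih =>
    intro m t
    have hder : ∀ τ : ℝ, HasDerivAt (fun τ : ℝ => (t - τ)^(k+1))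
        (-((k+1 : ℝ) * (t - τ)^k)) τ := by
      intro τ
      have h1 : HasDerivAt (fun τ : ℝ => t - τ) (-1) τ := by
        simpa using (hasDerivAt_id τ).const_sub t
      have := (hasDerivAt_pow (k+1) (t - τ)).comp τ h1
      refine this.congr_deriv ?_
      push_cast; ring
    have hder2 : ∀ τ : ℝ, HasDerivAt (fun τ : ℝ => τ^(m+1) / (m+1))
        (τ^m) τ := by
      intro τ
      have := (hasDerivAt_pow (m+1) τ).div_const ((m:ℝ)+1)
      refine this.congr_deriv ?_
      push_cast
      field_simp
    have hIBP := integral_mul_deriv_eq_deriv_mul_of_hasDerivAt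
      (a := 0) (b := t)
      (u := fun τ : ℝ => (t - τ)^(k+1)) (v := fun τ : ℝ => τ^(m+1) / (m+1))
      (u' := fun τ : ℝ => -((k+1 : ℝ) * (t - τ)^k)) (v' := fun τ : ℝ => τ^m)
      (fun τ _ => ((hder τ)).continuousAt.continuousWithinAt)
      (fun τ _ => ((hder2 τ)).continuousAt.continuousWithinAt)
      (fun τ _ => hder τ) (fun τ _ => hder2 τ)
      (Continuous.intervalIntegrable (by continuity) 0 t)
      (Continuous.intervalIntegrable (by continuity) 0 t)
    rw [hIBP]
    have : ∫ τ in (0:ℝ)..t, -((k+1:ℝ) * (t-τ)^k) * (τ^(m+1)/(m+1))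
        = -((k+1:ℝ)/(m+1)) * ∫ τ in (0:ℝ)..t, (t-τ)^k * τ^(m+1) := by
      rw [← intervalIntegral.integral_const_mul]
      congr 1; ext τ; ring
    rw [this, ih (m+1) t]
    have h1 : ((k+1+m+1).factorial : ℝ) ≠ 0 := by positivity
    have h2 : ((m+1 : ℝ)) ≠ 0 := by positivity
    have hfac : ((k+1) + m + 1) = (k + (m+1) + 1) := by ring
    rw [hfac]
    push_cast [Nat.factorial_succ]
    field_simp
    ring

end Helpers

/-- The generalized time convolution
`(F₁ ∗ F₂)(x,y;t) = ∫₀ᵗ ∫_X F₁(x,z;t−τ) F₂(z,y;τ) μ(dz) dτ`. -/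
noncomputable def timeConv {X : Type*} [MeasurableSpace X] (μ : Measure X)
    (F₁ F₂ : X → X → ℝ → ℝ) (x y : X) (t : ℝ) : ℝ :=
  ∫ τ in (0:ℝ)..t, ∫ z, F₁ x z (t - τ) * F₂ z y τ ∂μ

/-- `iterConv μ f n = f^{∗(n+1)}`, the `(n+1)`-fold generalized time convolution of `f`. -/
noncomputable def iterConv {X : Type*} [MeasurableSpace X] (μ : Measure X)
    (f : X → X → ℝ → ℝ) : ℕ → X → X → ℝ → ℝ
  | 0 => f
  | n + 1 => timeConv μ f (iterConv μ f n)

/-- Pointwise bound on the ℓ-fold convolution, `(2,2)` case. -/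
theorem iterated_convolution_pointwise_bound_two_two
    {X : Type*} [MeasurableSpace X] (μ : Measure X)
    (f : X → X → ℝ → ℝ)
    (hfm : Measurable fun z : X × X × ℝ => f z.1 z.2.1 z.2.2)
    (hfL2fst : ∀ x t, 0 < t → MemLp (fun z => f x z t) 2 μ)
    (hfL2snd : ∀ y t, 0 < t → MemLp (fun z => f z y t) 2 μ)
    (hft : ∀ x y b, 0 < b → IntegrableOn (fun t => f x y t) (Ioo 0 b))
    (t₀ C₁ C₂ : ℝ) (ht₀ : 0 < t₀) (hC₁ : 0 ≤ C₁) (hC₂ : 0 ≤ C₂) (k : ℕ)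
    (h : X → ℝ) (hh : ∀ x, 0 ≤ h x) (hhL2 : MemLp h 2 μ)
    (hb₁ : ∀ x t, 0 < t → t < t₀ →
      eLpNorm (fun z => f x z t) 2 μ ≤ ENNReal.ofReal (C₁ * h x * t ^ k))
    (hb₂ : ∀ y t, 0 < t → t < t₀ →
      eLpNorm (fun z => f z y t) 2 μ ≤ ENNReal.ofReal C₂) :
    ∀ l : ℕ, 2 ≤ l → ∀ x y t, 0 < t → t < t₀ →
      |iterConv μ f (l - 1) x y t| ≤
        C₁ ^ (l - 1) * C₂ * ((eLpNorm h 2 μ).toReal) ^ (l - 2) * h x *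
          ((k.factorial : ℝ)) ^ (l - 1) * t ^ ((l - 1) * (k + 1)) /
          (((l - 1) * (k + 1)).factorial : ℝ) := by
  
  intro l hl x y t ht htt₀
  have hsec1 : ∀ x s, Measurable fun z => f x z s := fun x s =>
    hfm.comp (measurable_const.prodMk (measurable_id.prodMk measurable_const))
  have hsec2 : ∀ y τ, Measurable fun z => f z y τ := fun y τ => by
    have hm2 : Measurable fun z : X => (z, (y, τ)) := measurable_id.prodMk measurable_const
    exact hfm.comp hm2
  set H := (eLpNorm h 2 μ).toReal with hH
  have hH0 : 0 ≤ H := ENNReal.toReal_nonneg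
  have hhfin : eLpNorm h 2 μ ≠ ∞ := hhL2.2.ne
  have hhm : AEMeasurable h μ := hhL2.1.aemeasurable
  have key : ∀ n : ℕ, 1 ≤ n → ∀ x y t, 0 < t → t < t₀ →
      |iterConv μ f n x y t| ≤
        C₁ ^ n * C₂ * H ^ (n-1) * (k.factorial : ℝ) ^ n / ((n*(k+1)).factorial : ℝ)
          * (h x * t ^ (n*(k+1))) := by
    intro n hn
    induction n, hn using Nat.le_induction with
    | base =>
      intro x y t ht htt₀
      have hconv : iterConv μ f 1 x y t
          = ∫ τ in (0:ℝ)..t, ∫ z, f x z (t - τ) * f z y τ ∂μ := rfl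
      rw [hconv]
      have hbd : ∀ τ ∈ Ioo (0:ℝ) t, |∫ z, f x z (t - τ) * f z y τ ∂μ|
          ≤ (C₁ * h x * C₂) * ((t - τ)^k * τ^0) := by
        intro τ hτ
        have hτt : 0 < t - τ := by simp [sub_pos, hτ.2]
        have hb := cs_bound (μ := μ) (D := C₁ * h x * (t - τ)^k) (E := C₂)
          (hsec1 x (t - τ)).aemeasurable
          (hsec2 y τ).aemeasurable
          (by have := hh x; positivity) hC₂
          (hb₁ x (t - τ) hτt (by have := hτ.1; linarith))
          (hb₂ y τ hτ.1 (hτ.2.trans htt₀))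
        calc |∫ z, f x z (t - τ) * f z y τ ∂μ| ≤ (C₁ * h x * (t - τ)^k) * C₂ := hb
          _ = (C₁ * h x * C₂) * ((t - τ)^k * τ^0) := by ring
      have hmain := abs_intervalIntegral_le ht.le
        (Continuous.intervalIntegrable (by fun_prop) 0 t)
        (fun τ hτ => by
          have h1 : 0 ≤ t - τ := by simp [sub_nonneg, hτ.2]
          have := hh x; positivity)
        hbd
      refine hmain.trans ?_
      rw [intervalIntegral.integral_const_mul, beta_nat]
      have e1 : 1 * (k+1) = k + 0 + 1 := by omega
      rw [e1]
      have h2 : ((k+0+1).factorial : ℝ) ≠ 0 := by positivity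
      simp only [pow_one, Nat.factorial_zero, Nat.cast_one]
      refine le_of_eq ?_
      field_simp
      ring
    | succ n hn ih =>
      intro x y t ht htt₀
      have hconv : iterConv μ f (n+1) x y t
          = ∫ τ in (0:ℝ)..t, ∫ z, f x z (t - τ) * iterConv μ f n z y τ ∂μ := rfl
      rw [hconv]
      set m := n * (k+1) with hm
      set Cn : ℝ := C₁ ^ n * C₂ * H ^ (n-1) * (k.factorial:ℝ)^n / ((m.factorial : ℝ))
        with hCn
      have hCn0 : 0 ≤ Cn := by
        have : (0:ℝ) < m.factorial := by positivity
        positivity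
      have hbd : ∀ τ ∈ Ioo (0:ℝ) t, |∫ z, f x z (t - τ) * iterConv μ f n z y τ ∂μ|
          ≤ (C₁ * h x * Cn * H) * ((t - τ)^k * τ^m) := by
        intro τ hτ
        have hτt : 0 < t - τ := by simp [sub_pos, hτ.2]
        have hτ0 : 0 < τ := hτ.1
        have hb := cs_bound' (μ := μ) (F := fun z => f x z (t - τ))
          (g := fun z => iterConv μ f n z y τ) (h := h)
          (D := C₁ * h x * (t - τ)^k) (c := Cn * τ^m)
          (hsec1 x (t - τ)).aemeasurable hhm hhfin
          (by have := hh x; positivity) (by positivity)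
          (hb₁ x (t - τ) hτt (by linarith))
          (fun z => by
            have hz := ih z y τ hτ0 (hτ.2.trans htt₀)
            calc |iterConv μ f n z y τ| ≤ Cn * (h z * τ^m) := hz
              _ = Cn * τ^m * h z := by ring)
        calc |∫ z, f x z (t - τ) * iterConv μ f n z y τ ∂μ|
            ≤ (C₁ * h x * (t - τ)^k) * (Cn * τ^m * H) := hb
          _ = (C₁ * h x * Cn * H) * ((t - τ)^k * τ^m) := by ring
      have hmain := abs_intervalIntegral_le ht.le
        (Continuous.intervalIntegrable (by fun_prop) 0 t)
        (fun τ hτ => by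
          have h1 : 0 ≤ t - τ := by simp [sub_nonneg, hτ.2]
          have h2 : 0 ≤ τ := hτ.1
          have := hh x; positivity)
        hbd
      refine hmain.trans ?_
      rw [intervalIntegral.integral_const_mul, beta_nat]
      have e1 : (n+1) * (k+1) = k + m + 1 := by simp [hm]; ring
      rw [e1]
      have hHn : H ^ (n+1-1) = H^(n-1) * H := by
        rw [← pow_succ]
        congr 1
        omega
      rw [hHn, hCn]
      have h2 : ((k+m+1).factorial : ℝ) ≠ 0 := by positivity
      have h3 : ((m.factorial : ℝ)) ≠ 0 := by positivity
      rw [pow_succ C₁, pow_succ (k.factorial : ℝ)]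
      refine le_of_eq ?_
      field_simp
  have hn1 : 1 ≤ l - 1 := by omega
  have hk := key (l-1) hn1 x y t ht htt₀
  calc |iterConv μ f (l-1) x y t|
      ≤ C₁ ^ (l-1) * C₂ * H ^ (l-1-1) * (k.factorial : ℝ) ^ (l-1)
          / (((l-1)*(k+1)).factorial : ℝ) * (h x * t ^ ((l-1)*(k+1))) := hk
    _ = C₁ ^ (l - 1) * C₂ * H ^ (l - 2) * h x *
          ((k.factorial : ℝ)) ^ (l - 1) * t ^ ((l - 1) * (k + 1)) /
          (((l - 1) * (k + 1)).factorial : ℝ) := by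
        rw [show l - 1 - 1 = l - 2 from by omega]
        ring
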